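/- Linear convergence of mirror flow under the PL inequality and inverse coercivity: let L : ℝⁿ → ℝ be continuously differentiable with L ≥ 0 and satisfying the PL inequality ‖∇L(x)‖₂² ≥ 2Λ·L(x) for all x, for some Λ > 0. Let A assign to each x ∈ ℝⁿ a linear map A(x) : ℝⁿ → ℝⁿ satisfying ⟨ξ, A(x)·ξ⟩ ≥ μ‖ξ‖₂² for all ξ, for some μ > 0. If θ : [0, ∞) → ℝⁿ is differentiable with θ'(t) = −A(θ(t))·∇L(θ(t)) for all t ≥ 0, then L(θ(t)) ≤ L(θ(0))·exp(−2μΛ·t) for all t ≥ 0. -/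

import Mathlib

open scoped RealInnerProductSpace

/-- Linear convergence of mirror flow under the PL inequality and inverse coercivity:
if `L : ℝⁿ → ℝ` is `C¹`, nonnegative and satisfies the PL inequality
`‖∇L(x)‖² ≥ 2Λ L(x)`, and `A` assigns to each point a linear map with
`⟪ξ, A(x) ξ⟫ ≥ μ ‖ξ‖²`, then any solution of the mirror flow `θ' = -A(θ) ∇L(θ)` on
`[0, ∞)` satisfies `L(θ(t)) ≤ L(θ(0)) exp (-2 μ Λ t)`. -/
theorem mirror_flow_linear_convergence (n : ℕ)
    (L : EuclideanSpace ℝ (Fin n) → ℝ) (hL : ContDiff ℝ 1 L)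
    (hL0 : ∀ x, 0 ≤ L x)
    (Λ : ℝ) (hΛ : 0 < Λ)
    (hPL : ∀ x, 2 * Λ * L x ≤ ‖gradient L x‖ ^ 2)
    (A : EuclideanSpace ℝ (Fin n) →
      (EuclideanSpace ℝ (Fin n) →L[ℝ] EuclideanSpace ℝ (Fin n)))
    (μ : ℝ) (hμ : 0 < μ)
    (hA : ∀ x ξ, μ * ‖ξ‖ ^ 2 ≤ ⟪ξ, A x ξ⟫)
    (θ : ℝ → EuclideanSpace ℝ (Fin n))
    (hθ : ∀ t : ℝ, 0 ≤ t → HasDerivAt θ (-(A (θ t) (gradient L (θ t)))) t) :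
    ∀ t : ℝ, 0 ≤ t → L (θ t) ≤ L (θ 0) * Real.exp (-(2 * μ * Λ * t)) := by
  set c : ℝ := 2 * μ * Λ with hc
  have hcpos : 0 < c := by positivity
  -- h t = L (θ t) * exp (c t)
  set h : ℝ → ℝ := fun t => L (θ t) * Real.exp (c * t) with hh
  have hderiv : ∀ t : ℝ, 0 ≤ t → HasDerivAt h
      ((⟪gradient L (θ t), -(A (θ t) (gradient L (θ t)))⟫ + c * L (θ t))
        * Real.exp (c * t)) t := by
    intro t ht
    have hLd : HasGradientAt L (gradient L (θ t)) (θ t) :=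
      (hL.differentiable one_ne_zero).differentiableAt.hasGradientAt
    have hcomp : HasDerivAt (fun s => L (θ s))
        ⟪gradient L (θ t), -(A (θ t) (gradient L (θ t)))⟫ t := by
      exact hLd.hasFDerivAt.comp_hasDerivAt t (hθ t ht)
    have hexp : HasDerivAt (fun s => Real.exp (c * s)) (c * Real.exp (c * t)) t := by
      simpa [mul_comm] using ((hasDerivAt_id t).const_mul c).exp
    have := hcomp.mul hexp
    refine this.congr_deriv ?_
    ring
  have hmono : AntitoneOn h (Set.Ici (0 : ℝ)) := by
    apply antitoneOn_of_deriv_nonpos (convex_Ici 0)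
    · intro t ht
      exact ((hderiv t ht).continuousAt).continuousWithinAt
    · intro t ht
      rw [interior_Ici] at ht
      exact (hderiv t ht.le).differentiableAt.differentiableWithinAt
    · intro t ht
      rw [interior_Ici] at ht
      rw [(hderiv t ht.le).deriv]
      have key : ⟪gradient L (θ t), -(A (θ t) (gradient L (θ t)))⟫ + c * L (θ t) ≤ 0 := by
        rw [inner_neg_right]
        have h1 := hA (θ t) (gradient L (θ t))
        have h2 := hPL (θ t)
        nlinarith
      exact mul_nonpos_of_nonpos_of_nonneg key (Real.exp_pos _).le
  intro t ht
  have := hmono (Set.self_mem_Ici) ht ht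
  simp only [hh, mul_zero, Real.exp_zero, mul_one] at this
  calc L (θ t) = h t * Real.exp (-(c * t)) := by
        rw [hh]; rw [Real.exp_neg]; field_simp
    _ ≤ L (θ 0) * Real.exp (-(c * t)) :=
        mul_le_mul_of_nonneg_right this (Real.exp_pos _).le
    _ = L (θ 0) * Real.exp (-(2 * μ * Λ * t)) := by rw [hc]
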